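/- arXiv:2404.00540 — 5 statements merged into one kernel-verified Lean document; each statement's English description precedes it below -/
import Mathlib

section
/- Barber–Agakov variational lower bound on mutual information: let (Ω, μ) be a probability space and let X : Ω → T, Y : Ω → S be measurable random variables taking values in finite types equipped with the discrete σ-algebra. Let q : T → S → ℝ satisfy q t s ≥ 0 for all t, s, Σ_{s∈S} q t s = 1 for every t ∈ T, and q t s > 0 whenever P(X=t, Y=s) > 0. Then I(X ; Y) ≥ H(Y) + Σ_{(t,s)∈T×S} P(X=t, Y=s) · log (q t s), where terms with P(X=t, Y=s) = 0 are omitted. -/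
open MeasureTheory ProbabilityTheory

/-- Shannon entropy (natural log) of a random variable `X` with values in a finite type,
with the convention `0 * log 0 = 0` (since `Real.log 0 = 0`). -/
noncomputable def entropy {Ω S : Type*} [MeasurableSpace Ω] [Fintype S]
    (μ : Measure Ω) (X : Ω → S) : ℝ :=
  -∑ s : S, (μ (X ⁻¹' {s})).toReal * Real.log (μ (X ⁻¹' {s})).toReal

/-- Conditional entropy `H(Y | B) = Σ_b P(B=b) * H(Y ; μ(·|B=b))`. -/
noncomputable def condEntropy {Ω S T : Type*} [MeasurableSpace Ω] [Fintype S] [Fintype T]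
    (μ : Measure Ω) (Y : Ω → S) (B : Ω → T) : ℝ :=
  ∑ t : T, (μ (B ⁻¹' {t})).toReal * entropy (ProbabilityTheory.cond μ (B ⁻¹' {t})) Y

/-- Mutual information `I(X;Y) = H(X) + H(Y) - H(⟨X,Y⟩)`. -/
noncomputable def mutualInfo {Ω T S : Type*} [MeasurableSpace Ω] [Fintype T] [Fintype S]
    (μ : Measure Ω) (X : Ω → T) (Y : Ω → S) : ℝ :=
  entropy μ X + entropy μ Y - entropy μ (fun ω => (X ω, Y ω))

/-- Conditional mutual information `I(O;Y|B) = Σ_b P(B=b) * I(O;Y ; μ(·|B=b))`. -/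
noncomputable def condMutualInfo {Ω U S T : Type*} [MeasurableSpace Ω]
    [Fintype U] [Fintype S] [Fintype T]
    (μ : Measure Ω) (O : Ω → U) (Y : Ω → S) (B : Ω → T) : ℝ :=
  ∑ t : T, (μ (B ⁻¹' {t})).toReal * mutualInfo (ProbabilityTheory.cond μ (B ⁻¹' {t})) O Y

lemma gibbs_aux {S : Type*} [Fintype S] (a q : S → ℝ) (ha : ∀ s, 0 ≤ a s)
    (hq0 : ∀ s, 0 ≤ q s) (hq1 : ∑ s, q s = 1) (hpos : ∀ s, 0 < a s → 0 < q s) :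
    ∑ s, a s * Real.log (q s) ≤
      ∑ s, a s * Real.log (a s) - (∑ s, a s) * Real.log (∑ s, a s) := by
  set A := ∑ s, a s with hA
  by_cases h0 : A = 0
  · have hz : ∀ s, a s = 0 := fun s =>
      (Finset.sum_eq_zero_iff_of_nonneg (fun s _ => ha s)).mp (by rw [← hA]; exact h0) s
        (Finset.mem_univ s)
    simp [hz, h0]
  · have hApos : 0 < A := lt_of_le_of_ne (Finset.sum_nonneg (fun s _ => ha s)) (Ne.symm h0)
    have key : ∑ s, a s * (Real.log (q s) + Real.log A - Real.log (a s)) ≤ 0 := by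
      have hterm : ∀ s ∈ Finset.univ, a s * (Real.log (q s) + Real.log A - Real.log (a s))
          ≤ q s * A - a s := by
        intro s _
        rcases eq_or_lt_of_le (ha s) with h | h
        · simp [← h]
          exact mul_nonneg (hq0 s) hApos.le
        · have hqs := hpos s h
          have hx : 0 < q s * A / a s := by positivity
          have hlog : Real.log (q s) + Real.log A - Real.log (a s)
              = Real.log (q s * A / a s) := by
            rw [Real.log_div (by positivity) (ne_of_gt h), Real.log_mul (ne_of_gt hqs) (ne_of_gt hApos)]
          rw [hlog]
          have := Real.log_le_sub_one_of_pos hx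
          calc a s * Real.log (q s * A / a s) ≤ a s * (q s * A / a s - 1) := by
                exact mul_le_mul_of_nonneg_left this h.le
            _ = q s * A - a s := by field_simp
      calc ∑ s, a s * (Real.log (q s) + Real.log A - Real.log (a s))
          ≤ ∑ s, (q s * A - a s) := Finset.sum_le_sum hterm
        _ = (∑ s, q s) * A - A := by rw [Finset.sum_sub_distrib, ← Finset.sum_mul, hA]
        _ = 0 := by rw [hq1]; ring
    have expand : ∑ s, a s * (Real.log (q s) + Real.log A - Real.log (a s))
        = ∑ s, a s * Real.log (q s) + A * Real.log A - ∑ s, a s * Real.log (a s) := by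
      simp only [mul_add, mul_sub]
      rw [Finset.sum_sub_distrib, Finset.sum_add_distrib, ← Finset.sum_mul]
    linarith [expand ▸ key]

/-- Barber–Agakov variational lower bound on mutual information. -/
theorem barber_agakov_lower_bound
    {Ω T S : Type*} [MeasurableSpace Ω]
    [Fintype T] [MeasurableSpace T] [DiscreteMeasurableSpace T]
    [Fintype S] [MeasurableSpace S] [DiscreteMeasurableSpace S]
    (μ : Measure Ω) [IsProbabilityMeasure μ]
    (X : Ω → T) (Y : Ω → S)
    (hX : Measurable X) (hY : Measurable Y)
    (q : T → S → ℝ)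
    (hq0 : ∀ t s, 0 ≤ q t s)
    (hq1 : ∀ t, ∑ s : S, q t s = 1)
    (hqpos : ∀ t s, 0 < (μ (X ⁻¹' {t} ∩ Y ⁻¹' {s})).toReal → 0 < q t s) :
    mutualInfo μ X Y ≥
      entropy μ Y +
        ∑ x : T × S,
          (μ (X ⁻¹' {x.1} ∩ Y ⁻¹' {x.2})).toReal * Real.log (q x.1 x.2) := by
  set p : T → S → ℝ := fun t s => (μ (X ⁻¹' {t} ∩ Y ⁻¹' {s})).toReal with hp
  have hpre : ∀ t s, (fun ω => (X ω, Y ω)) ⁻¹' {(t, s)} = X ⁻¹' {t} ∩ Y ⁻¹' {s} := by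
    intro t s; ext ω; simp [Prod.ext_iff]
  have hmarg : ∀ t, (μ (X ⁻¹' {t})).toReal = ∑ s, p t s := by
    intro t
    have hset : X ⁻¹' {t} = ⋃ s, X ⁻¹' {t} ∩ Y ⁻¹' {s} := by
      ext ω; simp
    rw [hset, measure_iUnion, tsum_fintype]
    · rw [ENNReal.toReal_sum (fun s _ => measure_ne_top μ _)]
    · intro s s' hss
      simp only [Set.disjoint_left]
      rintro ω ⟨-, h1⟩ ⟨-, h2⟩
      exact hss (h1.symm.trans h2)
    · exact fun s => (hX (measurableSet_singleton t)).inter (hY (measurableSet_singleton s))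
  have key : ∀ t ∈ Finset.univ, ∑ s, p t s * Real.log (q t s) ≤
      ∑ s, p t s * Real.log (p t s)
        - (μ (X ⁻¹' {t})).toReal * Real.log (μ (X ⁻¹' {t})).toReal := by
    intro t _
    rw [hmarg t]
    exact gibbs_aux (p t) (q t) (fun s => ENNReal.toReal_nonneg) (hq0 t) (hq1 t) (hqpos t)
  have hsum := Finset.sum_le_sum key
  rw [Finset.sum_sub_distrib] at hsum
  simp only [mutualInfo, entropy, ge_iff_le]
  rw [Fintype.sum_prod_type]
  simp only [hpre]
  rw [Fintype.sum_prod_type]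
  linarith [hsum]
end

section
/- Conditional Barber–Agakov variational lower bound: let (Ω, μ) be a probability space and let Y : Ω → S, B : Ω → T, O : Ω → U be measurable random variables taking values in finite types equipped with the discrete σ-algebra. Let q : T → U → S → ℝ satisfy q t u s ≥ 0 for all t, u, s, Σ_{s∈S} q t u s = 1 for every (t,u) ∈ T×U, and q t u s > 0 whenever P(B=t, O=u, Y=s) > 0. Then I(O ; Y | B) ≥ H(Y | B) + Σ_{(t,u,s)∈T×U×S} P(B=t, O=u, Y=s) · log (q t u s), where terms with P(B=t, O=u, Y=s) = 0 are omitted. -/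
open MeasureTheory ProbabilityTheory

private lemma term_bound {a b c : ℝ} (ha : 0 ≤ a) (hab : a ≤ b) (hc : 0 ≤ c)
    (hcpos : 0 < a → 0 < c) :
    a * Real.log c - a * (Real.log a - Real.log b) ≤ c * b - a := by
  rcases eq_or_lt_of_le ha with h | h
  · rw [← h]
    simp only [zero_mul, sub_zero, sub_self]
    have hb : 0 ≤ b := le_trans ha hab
    positivity
  · have hb : 0 < b := lt_of_lt_of_le h hab
    have hc' : 0 < c := hcpos h
    have hx : 0 < c * b / a := by positivity
    have hlog := Real.log_le_sub_one_of_pos hx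
    have hlogeq : Real.log (c * b / a) = Real.log c + Real.log b - Real.log a := by
      rw [Real.log_div (by positivity) h.ne', Real.log_mul hc'.ne' hb.ne']
    rw [hlogeq] at hlog
    have h1 : a * (Real.log c + Real.log b - Real.log a) ≤ a * (c * b / a - 1) :=
      mul_le_mul_of_nonneg_left hlog ha
    have h2 : a * (c * b / a - 1) = c * b - a := by field_simp
    calc a * Real.log c - a * (Real.log a - Real.log b)
        = a * (Real.log c + Real.log b - Real.log a) := by ring
      _ ≤ a * (c * b / a - 1) := h1
      _ = c * b - a := h2

private lemma gibbs {ι : Type*} [Fintype ι] (a b c : ι → ℝ)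
    (ha : ∀ i, 0 ≤ a i) (hab : ∀ i, a i ≤ b i) (hc : ∀ i, 0 ≤ c i)
    (hcpos : ∀ i, 0 < a i → 0 < c i)
    (hsum : ∑ i, c i * b i ≤ ∑ i, a i) :
    ∑ i, a i * Real.log (c i) ≤ ∑ i, a i * (Real.log (a i) - Real.log (b i)) := by
  have h : ∑ i, (a i * Real.log (c i) - a i * (Real.log (a i) - Real.log (b i))) ≤
      ∑ i, (c i * b i - a i) :=
    Finset.sum_le_sum fun i _ => term_bound (ha i) (hab i) (hc i) (hcpos i)
  simp only [Finset.sum_sub_distrib] at h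
  linarith

private lemma toReal_sum_inter {Ω S : Type*} [MeasurableSpace Ω] [Fintype S]
    [MeasurableSpace S] [DiscreteMeasurableSpace S]
    (ν : Measure Ω) [IsFiniteMeasure ν] {A : Set Ω}
    {Y : Ω → S} (hY : Measurable Y) :
    ∑ s : S, (ν (A ∩ Y ⁻¹' {s})).toReal = (ν A).toReal := by
  rw [← ENNReal.toReal_sum (fun s _ => measure_ne_top ν _)]
  congr 1
  have h : ∀ s : S, ν (A ∩ Y ⁻¹' {s}) = ν.restrict A (Y ⁻¹' {s}) := fun s => by
    rw [Measure.restrict_apply (hY (measurableSet_singleton s)), Set.inter_comm]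
  simp_rw [h]
  rw [sum_measure_preimage_singleton Finset.univ (fun s _ => hY (measurableSet_singleton s))]
  simp

private lemma BA {Ω S U : Type*} [MeasurableSpace Ω]
    [Fintype S] [MeasurableSpace S] [DiscreteMeasurableSpace S]
    [Fintype U] [MeasurableSpace U] [DiscreteMeasurableSpace U]
    (ν : Measure Ω) [IsProbabilityMeasure ν]
    (Y : Ω → S) (O : Ω → U) (hY : Measurable Y) (hO : Measurable O)
    (q : U → S → ℝ) (hq0 : ∀ u s, 0 ≤ q u s) (hq1 : ∀ u, ∑ s : S, q u s = 1)
    (hqpos : ∀ u s, 0 < (ν (O ⁻¹' {u} ∩ Y ⁻¹' {s})).toReal → 0 < q u s) :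
    entropy ν Y + ∑ x : U × S, (ν (O ⁻¹' {x.1} ∩ Y ⁻¹' {x.2})).toReal * Real.log (q x.1 x.2)
      ≤ mutualInfo ν O Y := by
  set a : U × S → ℝ := fun x => (ν (O ⁻¹' {x.1} ∩ Y ⁻¹' {x.2})).toReal with ha_def
  set b : U × S → ℝ := fun x => (ν (O ⁻¹' {x.1})).toReal with hb_def
  have hpair : ∀ x : U × S, (fun ω => (O ω, Y ω)) ⁻¹' {x} = O ⁻¹' {x.1} ∩ Y ⁻¹' {x.2} := by
    intro x
    ext ω
    simp [Prod.ext_iff]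
  have hOY : entropy ν (fun ω => (O ω, Y ω)) = -∑ x : U × S, a x * Real.log (a x) := by
    unfold entropy
    congr 1
    exact Finset.sum_congr rfl fun x _ => by rw [hpair x]
  have hmarg : ∀ u : U, ∑ s : S, a (u, s) = (ν (O ⁻¹' {u})).toReal := fun u => by
    simp only [ha_def]
    exact toReal_sum_inter (A := O ⁻¹' {u}) ν hY
  have hO' : entropy ν O = -∑ x : U × S, a x * Real.log (b x) := by
    unfold entropy
    congr 1
    rw [Fintype.sum_prod_type]
    exact Finset.sum_congr rfl fun u _ => by
      symm
      simp only [hb_def]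
      rw [← Finset.sum_mul, hmarg u]
  have hkey : ∑ x : U × S, a x * Real.log (q x.1 x.2) ≤
      ∑ x : U × S, a x * (Real.log (a x) - Real.log (b x)) := by
    apply gibbs
    · intro i; exact ENNReal.toReal_nonneg
    · intro i
      exact ENNReal.toReal_mono (measure_ne_top ν _)
        (measure_mono Set.inter_subset_left)
    · intro i; exact hq0 i.1 i.2
    · intro i h; exact hqpos i.1 i.2 h
    · have h1 : ∑ x : U × S, q x.1 x.2 * b x = 1 := by
        rw [Fintype.sum_prod_type]
        have : ∀ u : U, ∑ s : S, q u s * b (u, s) = (ν (O ⁻¹' {u})).toReal := by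
          intro u
          simp only [hb_def]
          rw [← Finset.sum_mul, hq1 u, one_mul]
        rw [Finset.sum_congr rfl fun u _ => this u]
        have := toReal_sum_inter (A := Set.univ) ν hO
        simp only [Set.univ_inter] at this
        rw [this]
        simp
      have h2 : ∑ x : U × S, a x = 1 := by
        rw [Fintype.sum_prod_type]
        rw [Finset.sum_congr rfl fun u _ => hmarg u]
        have := toReal_sum_inter (A := Set.univ) ν hO
        simp only [Set.univ_inter] at this
        rw [this]
        simp
      rw [h1, h2]
  unfold mutualInfo
  rw [hOY, hO']
  have : ∑ x : U × S, a x * (Real.log (a x) - Real.log (b x)) =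
      (-∑ x : U × S, a x * Real.log (b x)) - (-∑ x : U × S, a x * Real.log (a x)) := by
    simp only [mul_sub]
    rw [Finset.sum_sub_distrib]
    ring
  linarith [hkey, this ▸ hkey]

/-- conditional Barber–Agakov variational lower bound. -/
theorem conditional_barber_agakov_lower_bound
    {Ω S T U : Type*} [MeasurableSpace Ω]
    [Fintype S] [MeasurableSpace S] [DiscreteMeasurableSpace S]
    [Fintype T] [MeasurableSpace T] [DiscreteMeasurableSpace T]
    [Fintype U] [MeasurableSpace U] [DiscreteMeasurableSpace U]
    (μ : Measure Ω) [IsProbabilityMeasure μ]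
    (Y : Ω → S) (B : Ω → T) (O : Ω → U)
    (hY : Measurable Y) (hB : Measurable B) (hO : Measurable O)
    (q : T → U → S → ℝ)
    (hq0 : ∀ t u s, 0 ≤ q t u s)
    (hq1 : ∀ t u, ∑ s : S, q t u s = 1)
    (hqpos : ∀ t u s,
      0 < (μ (B ⁻¹' {t} ∩ O ⁻¹' {u} ∩ Y ⁻¹' {s})).toReal → 0 < q t u s) :
    condMutualInfo μ O Y B ≥
      condEntropy μ Y B +
        ∑ x : T × U × S,
          (μ (B ⁻¹' {x.1} ∩ O ⁻¹' {x.2.1} ∩ Y ⁻¹' {x.2.2})).toReal *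
            Real.log (q x.1 x.2.1 x.2.2) := by
  classical
  have hBt : ∀ t : T, MeasurableSet (B ⁻¹' {t}) := fun t => hB (measurableSet_singleton t)
  -- key factorization
  have key : ∀ (t : T) (u : U) (s : S),
      (μ (B ⁻¹' {t} ∩ O ⁻¹' {u} ∩ Y ⁻¹' {s})).toReal =
      (μ (B ⁻¹' {t})).toReal *
        ((μ[|B ⁻¹' {t}]) (O ⁻¹' {u} ∩ Y ⁻¹' {s})).toReal := by
    intro t u s
    rw [cond_apply (hBt t)]
    rcases eq_or_ne (μ (B ⁻¹' {t})) 0 with h0 | h0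
    · have h1 : μ (B ⁻¹' {t} ∩ O ⁻¹' {u} ∩ Y ⁻¹' {s}) = 0 := by
        refine measure_mono_null ?_ h0
        intro ω hω
        exact hω.1.1
      rw [h1, h0]
      simp
    · have hfin : μ (B ⁻¹' {t}) ≠ ⊤ := measure_ne_top μ _
      rw [Set.inter_assoc, ENNReal.toReal_mul, ENNReal.toReal_inv]
      rw [← mul_assoc, mul_inv_cancel₀ (by
        simp [ENNReal.toReal_ne_zero, h0, hfin]), one_mul]
  -- rewrite the big sum
  have hRHS : (∑ x : T × U × S,
      (μ (B ⁻¹' {x.1} ∩ O ⁻¹' {x.2.1} ∩ Y ⁻¹' {x.2.2})).toReal *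
        Real.log (q x.1 x.2.1 x.2.2)) =
      ∑ t : T, (μ (B ⁻¹' {t})).toReal *
        ∑ y : U × S, ((μ[|B ⁻¹' {t}]) (O ⁻¹' {y.1} ∩ Y ⁻¹' {y.2})).toReal *
          Real.log (q t y.1 y.2) := by
    rw [Fintype.sum_prod_type]
    refine Finset.sum_congr rfl fun t _ => ?_
    rw [Finset.mul_sum]
    refine Finset.sum_congr rfl fun y _ => ?_
    rw [key t y.1 y.2]
    ring
  rw [ge_iff_le, hRHS]
  unfold condMutualInfo condEntropy
  rw [← Finset.sum_add_distrib]
  refine Finset.sum_le_sum fun t _ => ?_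
  rw [← mul_add]
  rcases eq_or_ne (μ (B ⁻¹' {t})) 0 with h0 | h0
  · simp [h0]
  · have : IsProbabilityMeasure (μ[|B ⁻¹' {t}]) := cond_isProbabilityMeasure h0
    refine mul_le_mul_of_nonneg_left ?_ ENNReal.toReal_nonneg
    refine BA (μ[|B ⁻¹' {t}]) Y O hY hO (q t) (hq0 t) (hq1 t) ?_
    intro u s hpos
    refine hqpos t u s ?_
    rw [key t u s]
    have hP : 0 < (μ (B ⁻¹' {t})).toReal :=
      ENNReal.toReal_pos h0 (measure_ne_top μ _)
    exact mul_pos hP hpos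
end

section
/- Exact decomposition of the Barber–Agakov gap: let (Ω, μ) be a probability space and let Y : Ω → S, B : Ω → T, O : Ω → U be measurable random variables taking values in finite types equipped with the discrete σ-algebra. Let q : T → U → S → ℝ satisfy q t u s ≥ 0 for all t, u, s, Σ_{s∈S} q t u s = 1 for every (t,u) ∈ T×U, and q t u s > 0 whenever P(B=t, O=u, Y=s) > 0. Then I(O ; Y | B) = H(Y | B) + Σ_{(t,u,s)} P(B=t, O=u, Y=s) · log (q t u s) + Σ_{(t,u): P(B=t,O=u)>0} P(B=t, O=u) · D_KL( P(Y = · | B=t, O=u) ‖ q t u · ). In particular, the slack in the conditional Barber–Agakov bound is exactly the expected Kullback–Leibler divergence between the true conditional distribution of Y given (B,O) and the variational distribution q. -/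
open MeasureTheory ProbabilityTheory

/-- Kullback–Leibler divergence between two finitely supported probability mass functions,
with the convention `0 * log(·) = 0`. -/
noncomputable def klDivFin {S : Type*} [Fintype S] (p q : S → ℝ) : ℝ :=
  ∑ s : S, p s * Real.log (p s / q s)

/- ===== auxiliary lemmas ===== -/

lemma cond_toReal {Ω : Type*} [MeasurableSpace Ω] (μ : Measure Ω)
    {A : Set Ω} (hA : MeasurableSet A) (s : Set Ω) :
    ((ProbabilityTheory.cond μ A) s).toReal = (μ (A ∩ s)).toReal / (μ A).toReal := by
  rw [ProbabilityTheory.cond_apply hA, ENNReal.toReal_mul, ENNReal.toReal_inv,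
    inv_mul_eq_div]

lemma sum_fiber {Ω S : Type*} [MeasurableSpace Ω] [Fintype S] [MeasurableSpace S]
    [DiscreteMeasurableSpace S] (μ : Measure Ω) [IsProbabilityMeasure μ]
    {Y : Ω → S} (hY : Measurable Y) (A : Set Ω) (hA : MeasurableSet A) :
    ∑ s : S, (μ (A ∩ Y ⁻¹' {s})).toReal = (μ A).toReal := by
  classical
  rw [← ENNReal.toReal_sum (fun s _ => measure_ne_top μ _)]
  congr 1
  rw [← measure_biUnion_finset ?_ (fun s _ => hA.inter (hY (measurableSet_singleton s)))]
  · congr 1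
    ext ω
    simp
  · intro a _ b _ hab
    simp only [Function.onFun]
    apply Set.disjoint_left.mpr
    rintro ω ⟨-, ha⟩ ⟨-, hb⟩
    simp only [Set.mem_preimage, Set.mem_singleton_iff] at ha hb
    exact hab (by rw [← ha, hb])

lemma pt1 {P PU PUS : ℝ} (hP : 0 < P) (h0 : 0 ≤ PUS) (hle : PUS ≤ PU) :
    PUS * Real.log (PUS / P) - PUS * Real.log (PU / P) = PUS * Real.log (PUS / PU) := by
  rcases h0.eq_or_lt with h | h
  · simp [← h]
  · have hPU : 0 < PU := lt_of_lt_of_le h hle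
    rw [Real.log_div h.ne' hP.ne', Real.log_div hPU.ne' hP.ne', Real.log_div h.ne' hPU.ne']
    ring

lemma pt2 {PU PUS q : ℝ} (h0 : 0 ≤ PUS) (hle : PUS ≤ PU) (hq : 0 < PUS → 0 < q) :
    PUS * Real.log (PUS / PU) = PUS * Real.log q + PUS * Real.log ((PUS / PU) / q) := by
  rcases h0.eq_or_lt with h | h
  · simp [← h]
  · have hPU : 0 < PU := lt_of_lt_of_le h hle
    have hq' := hq h
    rw [Real.log_div (by positivity) hq'.ne']
    ring

lemma step1_real {U S : Type*} [Fintype U] [Fintype S]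
    {P : ℝ} (hP : 0 < P) (PU : U → ℝ) (PUS : U → S → ℝ)
    (h0 : ∀ u s, 0 ≤ PUS u s) (hsum : ∀ u, ∑ s, PUS u s = PU u) :
    P * (-∑ u, (PU u / P) * Real.log (PU u / P))
      - P * (-∑ p : U × S, (PUS p.1 p.2 / P) * Real.log (PUS p.1 p.2 / P))
    = ∑ p : U × S, PUS p.1 p.2 * Real.log (PUS p.1 p.2 / PU p.1) := by
  have hle : ∀ u s, PUS u s ≤ PU u := fun u s =>
    (hsum u) ▸ Finset.single_le_sum (fun s _ => h0 u s) (Finset.mem_univ s)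
  have e1 : ∀ (x : ℝ), P * ((x / P) * Real.log (x / P)) = x * Real.log (x / P) := by
    intro x
    field_simp
  calc P * (-∑ u, (PU u / P) * Real.log (PU u / P))
        - P * (-∑ p : U × S, (PUS p.1 p.2 / P) * Real.log (PUS p.1 p.2 / P))
      = ∑ p : U × S, PUS p.1 p.2 * Real.log (PUS p.1 p.2 / P)
        - ∑ u, PU u * Real.log (PU u / P) := by
        rw [mul_neg, mul_neg, Finset.mul_sum, Finset.mul_sum]
        simp only [e1]
        ring
    _ = ∑ p : U × S, (PUS p.1 p.2 * Real.log (PUS p.1 p.2 / P)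
          - PUS p.1 p.2 * Real.log (PU p.1 / P)) := by
        rw [Finset.sum_sub_distrib]
        congr 1
        simp only [Fintype.sum_prod_type]
        apply Finset.sum_congr rfl
        intro u _
        rw [← Finset.sum_mul, hsum u]
    _ = ∑ p : U × S, PUS p.1 p.2 * Real.log (PUS p.1 p.2 / PU p.1) := by
        apply Finset.sum_congr rfl
        intro p _
        exact pt1 hP (h0 p.1 p.2) (hle p.1 p.2)

open scoped Classical in
/-- exact decomposition of the Barber–Agakov gap: the slack in the conditional
Barber–Agakov bound is exactly the expected KL divergence between the true conditional
distribution of `Y` given `(B,O)` and the variational distribution `q`. -/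
theorem conditional_barber_agakov_gap
    {Ω S T U : Type*} [MeasurableSpace Ω]
    [Fintype S] [MeasurableSpace S] [DiscreteMeasurableSpace S]
    [Fintype T] [MeasurableSpace T] [DiscreteMeasurableSpace T]
    [Fintype U] [MeasurableSpace U] [DiscreteMeasurableSpace U]
    (μ : Measure Ω) [IsProbabilityMeasure μ]
    (Y : Ω → S) (B : Ω → T) (O : Ω → U)
    (hY : Measurable Y) (hB : Measurable B) (hO : Measurable O)
    (q : T → U → S → ℝ)
    (hq0 : ∀ t u s, 0 ≤ q t u s)
    (hq1 : ∀ t u, ∑ s : S, q t u s = 1)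
    (hqpos : ∀ t u s,
      0 < (μ (B ⁻¹' {t} ∩ O ⁻¹' {u} ∩ Y ⁻¹' {s})).toReal → 0 < q t u s) :
    condMutualInfo μ O Y B =
      condEntropy μ Y B +
        (∑ x : T × U × S,
          (μ (B ⁻¹' {x.1} ∩ O ⁻¹' {x.2.1} ∩ Y ⁻¹' {x.2.2})).toReal *
            Real.log (q x.1 x.2.1 x.2.2)) +
        ∑ tu ∈ Finset.univ.filter
            (fun tu : T × U => 0 < (μ (B ⁻¹' {tu.1} ∩ O ⁻¹' {tu.2})).toReal),
          (μ (B ⁻¹' {tu.1} ∩ O ⁻¹' {tu.2})).toReal *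
            klDivFin
              (fun s => (μ (B ⁻¹' {tu.1} ∩ O ⁻¹' {tu.2} ∩ Y ⁻¹' {s})).toReal /
                (μ (B ⁻¹' {tu.1} ∩ O ⁻¹' {tu.2})).toReal)
              (q tu.1 tu.2) := by
  classical
  have hBt : ∀ t : T, MeasurableSet (B ⁻¹' {t}) := fun t => hB (measurableSet_singleton t)
  have hBtOu : ∀ (t : T) (u : U), MeasurableSet (B ⁻¹' {t} ∩ O ⁻¹' {u}) :=
    fun t u => (hBt t).inter (hO (measurableSet_singleton u))
  -- nonnegativity and domination facts
  have h0 : ∀ (t : T) (u : U) (s : S),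
      0 ≤ (μ (B ⁻¹' {t} ∩ O ⁻¹' {u} ∩ Y ⁻¹' {s})).toReal := fun _ _ _ => ENNReal.toReal_nonneg
  have hsum : ∀ (t : T) (u : U),
      ∑ s : S, (μ (B ⁻¹' {t} ∩ O ⁻¹' {u} ∩ Y ⁻¹' {s})).toReal
        = (μ (B ⁻¹' {t} ∩ O ⁻¹' {u})).toReal := fun t u => sum_fiber μ hY _ (hBtOu t u)
  have hle : ∀ (t : T) (u : U) (s : S),
      (μ (B ⁻¹' {t} ∩ O ⁻¹' {u} ∩ Y ⁻¹' {s})).toReal ≤ (μ (B ⁻¹' {t} ∩ O ⁻¹' {u})).toReal :=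
    fun t u s => (hsum t u) ▸ Finset.single_le_sum (fun s _ => h0 t u s) (Finset.mem_univ s)
  -- Step 1 : I(O;Y|B) = H(Y|B) + Σ_{t,u,s} P(t,u,s) log (P(t,u,s)/P(t,u))
  have key1 : condMutualInfo μ O Y B = condEntropy μ Y B +
      ∑ x : T × U × S,
        (μ (B ⁻¹' {x.1} ∩ O ⁻¹' {x.2.1} ∩ Y ⁻¹' {x.2.2})).toReal *
          Real.log ((μ (B ⁻¹' {x.1} ∩ O ⁻¹' {x.2.1} ∩ Y ⁻¹' {x.2.2})).toReal /
            (μ (B ⁻¹' {x.1} ∩ O ⁻¹' {x.2.1})).toReal) := by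
    rw [condMutualInfo, condEntropy, Fintype.sum_prod_type, ← Finset.sum_add_distrib]
    apply Finset.sum_congr rfl
    intro t _
    by_cases ht : μ (B ⁻¹' {t}) = 0
    · have hz : ∀ (u : U) (s : S), μ (B ⁻¹' {t} ∩ O ⁻¹' {u} ∩ Y ⁻¹' {s}) = 0 := by
        intro u s
        exact measure_mono_null (fun ω hω => hω.1.1) ht
      simp [ht, hz]
    · have htpos : 0 < (μ (B ⁻¹' {t})).toReal :=
        ENNReal.toReal_pos ht (measure_ne_top μ _)
      have hHO : entropy (ProbabilityTheory.cond μ (B ⁻¹' {t})) O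
          = -∑ u : U, ((μ (B ⁻¹' {t} ∩ O ⁻¹' {u})).toReal / (μ (B ⁻¹' {t})).toReal) *
              Real.log ((μ (B ⁻¹' {t} ∩ O ⁻¹' {u})).toReal / (μ (B ⁻¹' {t})).toReal) := by
        simp only [entropy, cond_toReal μ (hBt t)]
      have hHOY : entropy (ProbabilityTheory.cond μ (B ⁻¹' {t})) (fun ω => (O ω, Y ω))
          = -∑ p : U × S,
              ((μ (B ⁻¹' {t} ∩ O ⁻¹' {p.1} ∩ Y ⁻¹' {p.2})).toReal / (μ (B ⁻¹' {t})).toReal) *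
              Real.log ((μ (B ⁻¹' {t} ∩ O ⁻¹' {p.1} ∩ Y ⁻¹' {p.2})).toReal /
                (μ (B ⁻¹' {t})).toReal) := by
        rw [entropy, neg_inj]
        apply Finset.sum_congr rfl
        intro p _
        have hpre : (fun ω => (O ω, Y ω)) ⁻¹' {p} = O ⁻¹' {p.1} ∩ Y ⁻¹' {p.2} := by
          ext ω
          simp [Prod.ext_iff]
        rw [hpre, cond_toReal μ (hBt t), ← Set.inter_assoc]
      have hmain := step1_real htpos
        (fun u => (μ (B ⁻¹' {t} ∩ O ⁻¹' {u})).toReal)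
        (fun u s => (μ (B ⁻¹' {t} ∩ O ⁻¹' {u} ∩ Y ⁻¹' {s})).toReal)
        (h0 t) (hsum t)
      rw [mutualInfo, hHO, hHOY]
      linear_combination hmain
  rw [key1]
  -- Step 2 : decompose the log ratio sum via q
  have key2 : ∑ x : T × U × S,
        (μ (B ⁻¹' {x.1} ∩ O ⁻¹' {x.2.1} ∩ Y ⁻¹' {x.2.2})).toReal *
          Real.log ((μ (B ⁻¹' {x.1} ∩ O ⁻¹' {x.2.1} ∩ Y ⁻¹' {x.2.2})).toReal /
            (μ (B ⁻¹' {x.1} ∩ O ⁻¹' {x.2.1})).toReal)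
      = (∑ x : T × U × S,
          (μ (B ⁻¹' {x.1} ∩ O ⁻¹' {x.2.1} ∩ Y ⁻¹' {x.2.2})).toReal *
            Real.log (q x.1 x.2.1 x.2.2)) +
        ∑ tu ∈ Finset.univ.filter
            (fun tu : T × U => 0 < (μ (B ⁻¹' {tu.1} ∩ O ⁻¹' {tu.2})).toReal),
          (μ (B ⁻¹' {tu.1} ∩ O ⁻¹' {tu.2})).toReal *
            klDivFin
              (fun s => (μ (B ⁻¹' {tu.1} ∩ O ⁻¹' {tu.2} ∩ Y ⁻¹' {s})).toReal /
                (μ (B ⁻¹' {tu.1} ∩ O ⁻¹' {tu.2})).toReal)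
              (q tu.1 tu.2) := by
    have hKL : ∑ tu ∈ Finset.univ.filter
            (fun tu : T × U => 0 < (μ (B ⁻¹' {tu.1} ∩ O ⁻¹' {tu.2})).toReal),
          (μ (B ⁻¹' {tu.1} ∩ O ⁻¹' {tu.2})).toReal *
            klDivFin
              (fun s => (μ (B ⁻¹' {tu.1} ∩ O ⁻¹' {tu.2} ∩ Y ⁻¹' {s})).toReal /
                (μ (B ⁻¹' {tu.1} ∩ O ⁻¹' {tu.2})).toReal)
              (q tu.1 tu.2)
        = ∑ t : T, ∑ u : U, ∑ s : S,
            (if 0 < (μ (B ⁻¹' {t} ∩ O ⁻¹' {u})).toReal then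
              (μ (B ⁻¹' {t} ∩ O ⁻¹' {u} ∩ Y ⁻¹' {s})).toReal *
                Real.log (((μ (B ⁻¹' {t} ∩ O ⁻¹' {u} ∩ Y ⁻¹' {s})).toReal /
                  (μ (B ⁻¹' {t} ∩ O ⁻¹' {u})).toReal) / q t u s)
            else 0) := by
      rw [Finset.sum_filter]
      rw [Fintype.sum_prod_type]
      apply Finset.sum_congr rfl
      intro t _
      apply Finset.sum_congr rfl
      intro u _
      split_ifs with h
      · rw [klDivFin, Finset.mul_sum]
        apply Finset.sum_congr rfl
        intro s _
        field_simp
      · simp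
    rw [hKL]
    simp only [Fintype.sum_prod_type]
    rw [← Finset.sum_add_distrib]
    apply Finset.sum_congr rfl
    intro t _
    rw [← Finset.sum_add_distrib]
    apply Finset.sum_congr rfl
    intro u _
    rw [← Finset.sum_add_distrib]
    apply Finset.sum_congr rfl
    intro s _
    by_cases h : 0 < (μ (B ⁻¹' {t} ∩ O ⁻¹' {u})).toReal
    · rw [if_pos h]
      exact pt2 (h0 t u s) (hle t u s) (hqpos t u s)
    · rw [if_neg h]
      have hz : (μ (B ⁻¹' {t} ∩ O ⁻¹' {u} ∩ Y ⁻¹' {s})).toReal = 0 :=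
        le_antisymm (le_trans (hle t u s) (not_lt.mp h)) (h0 t u s)
      simp [hz]
  rw [key2]
  ring
end

section
/- Unnormalized (energy-based) Barber–Agakov bound: let (Ω, μ) be a probability space and let Y : Ω → S, B : Ω → T, O : Ω → U be measurable random variables taking values in finite types equipped with the discrete σ-algebra. Let 𝓔 : T → U → S → ℝ be any critic function, and for (t,u) with P(B=t) > 0 define the partition function Z(t,u) = Σ_{s∈S} P(Y=s | B=t) · exp(𝓔 t u s). Then I(O ; Y | B) ≥ Σ_{(t,u,s)} P(B=t, O=u, Y=s) · 𝓔 t u s − Σ_{(t,u): P(B=t,O=u)>0} P(B=t, O=u) · log Z(t,u). -/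
open MeasureTheory ProbabilityTheory

private lemma ba_core {U S : Type*} [Fintype U] [Fintype S]
    (p : U → S → ℝ) (hp : ∀ u s, 0 ≤ p u s)
    (hsum : ∑ u : U, ∑ s : S, p u s = 1) (E : U → S → ℝ) :
    (∑ u : U, ∑ s : S, p u s * E u s)
      - ∑ u : U, (∑ s : S, p u s) *
          Real.log (∑ s : S, (∑ u' : U, p u' s) * Real.exp (E u s))
    ≤ (∑ u : U, ∑ s : S, p u s * Real.log (p u s))
      - (∑ u : U, ∑ s : S, p u s * Real.log (∑ s' : S, p u s'))
      - (∑ u : U, ∑ s : S, p u s * Real.log (∑ u' : U, p u' s)) := by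
  set pU : U → ℝ := fun u => ∑ s : S, p u s with hpUdef
  set pS : S → ℝ := fun s => ∑ u : U, p u s with hpSdef
  set Z : U → ℝ := fun u => ∑ s : S, pS s * Real.exp (E u s) with hZdef
  have hpU0 : ∀ u, 0 ≤ pU u := fun u => Finset.sum_nonneg fun s _ => hp u s
  have hpS0 : ∀ s, 0 ≤ pS s := fun s => Finset.sum_nonneg fun u _ => hp u s
  have hsumS : ∑ s : S, pS s = 1 := by rw [Finset.sum_comm] at hsum; exact hsum
  have hexS : ∃ s : S, 0 < pS s := by
    by_contra h
    push_neg at h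
    have := Finset.sum_nonpos (s := (Finset.univ : Finset S)) (fun s _ => h s)
    rw [hsumS] at this; linarith
  obtain ⟨s₀, hs₀⟩ := hexS
  have hZ0 : ∀ u, 0 < Z u := by
    intro u
    refine Finset.sum_pos' (fun s _ => mul_nonneg (hpS0 s) (Real.exp_pos _).le) ?_
    exact ⟨s₀, Finset.mem_univ _, mul_pos hs₀ (Real.exp_pos _)⟩
  set q : U → S → ℝ := fun u s => pU u * pS s * Real.exp (E u s) / Z u with hqdef
  have hq0 : ∀ u s, 0 ≤ q u s := fun u s =>
    div_nonneg (mul_nonneg (mul_nonneg (hpU0 u) (hpS0 s)) (Real.exp_pos _).le) (hZ0 u).le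
  have hqsum : ∀ u, ∑ s : S, q u s = pU u := by
    intro u
    have : ∑ s : S, q u s = pU u * Z u / Z u := by
      rw [hqdef]
      simp only
      rw [← Finset.sum_div]
      congr 1
      rw [hZdef]
      simp only
      rw [Finset.mul_sum]
      exact Finset.sum_congr rfl fun s _ => by ring
    rw [this, mul_div_assoc, div_self (hZ0 u).ne', mul_one]
  set F : U → S → ℝ := fun u s => p u s *
    (Real.log (p u s) - Real.log (pU u) - Real.log (pS s) - E u s + Real.log (Z u)) with hFdef
  have hterm : ∀ u s, p u s - q u s ≤ F u s := by
    intro u s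
    rcases eq_or_lt_of_le (hp u s) with h0 | hpos
    · have : F u s = 0 := by rw [hFdef]; simp [← h0]
      rw [this, ← h0]
      simpa using hq0 u s
    · have hpUu : 0 < pU u :=
        lt_of_lt_of_le hpos (Finset.single_le_sum (fun s _ => hp u s) (Finset.mem_univ s))
      have hpSs : 0 < pS s :=
        lt_of_lt_of_le hpos (Finset.single_le_sum (fun u _ => hp u s) (Finset.mem_univ u))
      have hq : 0 < q u s :=
        div_pos (mul_pos (mul_pos hpUu hpSs) (Real.exp_pos _)) (hZ0 u)
      have hlog : Real.log (p u s) - Real.log (pU u) - Real.log (pS s) - E u s + Real.log (Z u)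
          = - Real.log (q u s / p u s) := by
        rw [Real.log_div hq.ne' hpos.ne', hqdef]
        simp only
        rw [Real.log_div (by positivity) (hZ0 u).ne',
          Real.log_mul (by positivity) (Real.exp_ne_zero _),
          Real.log_mul hpUu.ne' hpSs.ne', Real.log_exp]
        ring
      have hb : Real.log (q u s / p u s) ≤ q u s / p u s - 1 :=
        Real.log_le_sub_one_of_pos (by positivity)
      have : p u s * Real.log (q u s / p u s) ≤ q u s - p u s := by
        have h2 : p u s * (q u s / p u s - 1) = q u s - p u s := by
          field_simp
        nlinarith [mul_le_mul_of_nonneg_left hb (hp u s)]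
      rw [hFdef]
      simp only
      rw [hlog]
      linarith
  have key : 0 ≤ ∑ u : U, ∑ s : S, F u s := by
    have h1 : ∑ u : U, ∑ s : S, (p u s - q u s) ≤ ∑ u : U, ∑ s : S, F u s :=
      Finset.sum_le_sum fun u _ => Finset.sum_le_sum fun s _ => hterm u s
    have h2 : ∑ u : U, ∑ s : S, (p u s - q u s) = 0 := by
      simp only [Finset.sum_sub_distrib]
      rw [hsum]
      have : ∀ u : U, ∑ s : S, q u s = pU u := hqsum
      rw [Finset.sum_congr rfl fun u _ => hqsum u]
      rw [show ∑ u : U, pU u = 1 from hsum]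
      ring
    linarith
  -- expand F
  have hB : ∑ u : U, pU u * Real.log (Z u) = ∑ u : U, ∑ s : S, p u s * Real.log (Z u) := by
    exact Finset.sum_congr rfl fun u _ => by rw [hpUdef]; exact Finset.sum_mul ..
  have expand : ∑ u : U, ∑ s : S, F u s
      = (∑ u : U, ∑ s : S, p u s * Real.log (p u s))
      - (∑ u : U, ∑ s : S, p u s * Real.log (pU u))
      - (∑ u : U, ∑ s : S, p u s * Real.log (pS s))
      - (∑ u : U, ∑ s : S, p u s * E u s)
      + (∑ u : U, ∑ s : S, p u s * Real.log (Z u)) := by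
    simp only [hFdef, mul_sub, mul_add, Finset.sum_add_distrib, Finset.sum_sub_distrib]
  linarith [key, expand, hB]


private lemma ba_marg {Ω S : Type*} [MeasurableSpace Ω] [Fintype S]
    [MeasurableSpace S] [DiscreteMeasurableSpace S]
    (μ : Measure Ω) [IsFiniteMeasure μ] {Y : Ω → S} (hY : Measurable Y) (A : Set Ω) :
    ∑ s : S, (μ (A ∩ Y ⁻¹' {s})).toReal = (μ A).toReal := by
  have h : ∑ s : S, μ (A ∩ Y ⁻¹' {s}) = μ A := by
    have h1 : ∀ s : S, μ (A ∩ Y ⁻¹' {s}) = μ.restrict A (Y ⁻¹' {s}) := by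
      intro s
      rw [Measure.restrict_apply (hY (measurableSet_singleton s)), Set.inter_comm]
    simp only [h1]
    rw [MeasureTheory.sum_measure_preimage_singleton Finset.univ
      (fun s _ => hY (measurableSet_singleton s))]
    simp
  rw [← h, ENNReal.toReal_sum (fun s _ => measure_ne_top μ _)]

private lemma ba_mi_ge {Ω U S : Type*} [MeasurableSpace Ω]
    [Fintype U] [MeasurableSpace U] [DiscreteMeasurableSpace U]
    [Fintype S] [MeasurableSpace S] [DiscreteMeasurableSpace S]
    (ν : Measure Ω) [IsProbabilityMeasure ν]
    {O : Ω → U} {Y : Ω → S} (hO : Measurable O) (hY : Measurable Y)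
    (E : U → S → ℝ) :
    (∑ u : U, ∑ s : S, (ν (O ⁻¹' {u} ∩ Y ⁻¹' {s})).toReal * E u s)
      - ∑ u : U, (ν (O ⁻¹' {u})).toReal *
          Real.log (∑ s : S, (ν (Y ⁻¹' {s})).toReal * Real.exp (E u s))
    ≤ mutualInfo ν O Y := by
  set p : U → S → ℝ := fun u s => (ν (O ⁻¹' {u} ∩ Y ⁻¹' {s})).toReal with hpdef
  have hp : ∀ u s, 0 ≤ p u s := fun u s => ENNReal.toReal_nonneg
  have hmU : ∀ u, (ν (O ⁻¹' {u})).toReal = ∑ s : S, p u s := fun u =>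
    (ba_marg ν hY (O ⁻¹' {u})).symm
  have hmS : ∀ s, (ν (Y ⁻¹' {s})).toReal = ∑ u : U, p u s := by
    intro s
    have := ba_marg ν hO (Y ⁻¹' {s})
    rw [← this]
    exact Finset.sum_congr rfl fun u _ => by rw [Set.inter_comm]
  have hsum : ∑ u : U, ∑ s : S, p u s = 1 := by
    have h1 : ∑ u : U, ∑ s : S, p u s = ∑ u : U, (ν (O ⁻¹' {u})).toReal :=
      Finset.sum_congr rfl fun u _ => (hmU u).symm
    have h2 := ba_marg ν hO Set.univ
    simp only [Set.univ_inter, measure_univ, ENNReal.toReal_one] at h2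
    rw [h1, h2]
  have hpair : ∀ x : U × S, (fun ω => (O ω, Y ω)) ⁻¹' {x} = O ⁻¹' {x.1} ∩ Y ⁻¹' {x.2} := by
    intro x
    ext ω
    simp [Prod.ext_iff]
  have hO' : entropy ν O = -∑ u : U, (∑ s : S, p u s) * Real.log (∑ s : S, p u s) := by
    unfold entropy
    congr 1
    exact Finset.sum_congr rfl fun u _ => by rw [hmU u]
  have hY' : entropy ν Y = -∑ s : S, (∑ u : U, p u s) * Real.log (∑ u : U, p u s) := by
    unfold entropy
    congr 1
    exact Finset.sum_congr rfl fun s _ => by rw [hmS s]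
  have hOY : entropy ν (fun ω => (O ω, Y ω))
      = -∑ u : U, ∑ s : S, p u s * Real.log (p u s) := by
    unfold entropy
    congr 1
    rw [Fintype.sum_prod_type]
    exact Finset.sum_congr rfl fun u _ => Finset.sum_congr rfl fun s _ => by
      rw [hpair (u, s)]
  have hcore := ba_core p hp hsum E
  have hEq1 : ∑ u : U, ∑ s : S, p u s * Real.log (∑ s' : S, p u s')
      = ∑ u : U, (∑ s : S, p u s) * Real.log (∑ s : S, p u s) :=
    Finset.sum_congr rfl fun u _ => (Finset.sum_mul ..).symm
  have hEq2 : ∑ u : U, ∑ s : S, p u s * Real.log (∑ u' : U, p u' s)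
      = ∑ s : S, (∑ u : U, p u s) * Real.log (∑ u : U, p u s) := by
    rw [Finset.sum_comm]
    exact Finset.sum_congr rfl fun s _ => (Finset.sum_mul ..).symm
  have hZeq : ∀ u : U, (∑ s : S, (ν (Y ⁻¹' {s})).toReal * Real.exp (E u s))
      = ∑ s : S, (∑ u' : U, p u' s) * Real.exp (E u s) :=
    fun u => Finset.sum_congr rfl fun s _ => by rw [hmS s]
  unfold mutualInfo
  rw [hO', hY', hOY]
  calc (∑ u : U, ∑ s : S, p u s * E u s)
      - ∑ u : U, (ν (O ⁻¹' {u})).toReal *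
          Real.log (∑ s : S, (ν (Y ⁻¹' {s})).toReal * Real.exp (E u s))
      = (∑ u : U, ∑ s : S, p u s * E u s)
      - ∑ u : U, (∑ s : S, p u s) *
          Real.log (∑ s : S, (∑ u' : U, p u' s) * Real.exp (E u s)) := by
        congr 1
        exact Finset.sum_congr rfl fun u _ => by rw [hmU u, hZeq u]
    _ ≤ _ := by
        refine le_trans hcore ?_
        rw [hEq1, hEq2]
        linarith

open scoped Classical in
/-- unnormalized (energy-based) Barber–Agakov bound with critic `𝓔` and
partition function `Z(t,u) = Σ_s P(Y=s | B=t) · exp(𝓔 t u s)`. -/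
theorem unnormalized_barber_agakov_lower_bound
    {Ω S T U : Type*} [MeasurableSpace Ω]
    [Fintype S] [MeasurableSpace S] [DiscreteMeasurableSpace S]
    [Fintype T] [MeasurableSpace T] [DiscreteMeasurableSpace T]
    [Fintype U] [MeasurableSpace U] [DiscreteMeasurableSpace U]
    (μ : Measure Ω) [IsProbabilityMeasure μ]
    (Y : Ω → S) (B : Ω → T) (O : Ω → U)
    (hY : Measurable Y) (hB : Measurable B) (hO : Measurable O)
    (𝓔 : T → U → S → ℝ) :
    condMutualInfo μ O Y B ≥
      (∑ x : T × U × S,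
        (μ (B ⁻¹' {x.1} ∩ O ⁻¹' {x.2.1} ∩ Y ⁻¹' {x.2.2})).toReal *
          𝓔 x.1 x.2.1 x.2.2) -
      ∑ tu ∈ Finset.univ.filter
          (fun tu : T × U => 0 < (μ (B ⁻¹' {tu.1} ∩ O ⁻¹' {tu.2})).toReal),
        (μ (B ⁻¹' {tu.1} ∩ O ⁻¹' {tu.2})).toReal *
          Real.log (∑ s : S,
            ((μ (B ⁻¹' {tu.1} ∩ Y ⁻¹' {s})).toReal / (μ (B ⁻¹' {tu.1})).toReal) *
              Real.exp (𝓔 tu.1 tu.2 s)) := by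
  have hfilter :
      (∑ tu ∈ Finset.univ.filter
          (fun tu : T × U => 0 < (μ (B ⁻¹' {tu.1} ∩ O ⁻¹' {tu.2})).toReal),
        (μ (B ⁻¹' {tu.1} ∩ O ⁻¹' {tu.2})).toReal *
          Real.log (∑ s : S,
            ((μ (B ⁻¹' {tu.1} ∩ Y ⁻¹' {s})).toReal / (μ (B ⁻¹' {tu.1})).toReal) *
              Real.exp (𝓔 tu.1 tu.2 s)))
      = ∑ tu : T × U,
        (μ (B ⁻¹' {tu.1} ∩ O ⁻¹' {tu.2})).toReal *
          Real.log (∑ s : S,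
            ((μ (B ⁻¹' {tu.1} ∩ Y ⁻¹' {s})).toReal / (μ (B ⁻¹' {tu.1})).toReal) *
              Real.exp (𝓔 tu.1 tu.2 s)) := by
    refine Finset.sum_subset (Finset.filter_subset _ _) ?_
    intro tu _ hnot
    simp only [Finset.mem_filter, Finset.mem_univ, true_and, not_lt] at hnot
    have : (μ (B ⁻¹' {tu.1} ∩ O ⁻¹' {tu.2})).toReal = 0 :=
      le_antisymm hnot ENNReal.toReal_nonneg
    rw [this, zero_mul]
  rw [ge_iff_le, hfilter, Fintype.sum_prod_type, Fintype.sum_prod_type,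
    ← Finset.sum_sub_distrib]
  unfold condMutualInfo
  refine Finset.sum_le_sum fun t _ => ?_
  by_cases hz : μ (B ⁻¹' {t}) = 0
  · have hnull : ∀ A : Set Ω, (μ (B ⁻¹' {t} ∩ A)).toReal = 0 := fun A => by
      rw [measure_mono_null Set.inter_subset_left hz, ENNReal.toReal_zero]
    have h1 : ∑ y : U × S,
        (μ (B ⁻¹' {t} ∩ O ⁻¹' {y.1} ∩ Y ⁻¹' {y.2})).toReal * 𝓔 t y.1 y.2 = 0 := by
      refine Finset.sum_eq_zero fun y _ => ?_
      rw [Set.inter_assoc, hnull, zero_mul]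
    have h2 : ∑ u : U,
        (μ (B ⁻¹' {t} ∩ O ⁻¹' {u})).toReal *
          Real.log (∑ s : S,
            ((μ (B ⁻¹' {t} ∩ Y ⁻¹' {s})).toReal / (μ (B ⁻¹' {t})).toReal) *
              Real.exp (𝓔 t u s)) = 0 := by
      refine Finset.sum_eq_zero fun u _ => ?_
      rw [hnull, zero_mul]
    rw [h1, h2, hz]
    simp
  · have hmeasB : MeasurableSet (B ⁻¹' {t}) := hB (measurableSet_singleton t)
    set ν := μ[|B ⁻¹' {t}] with hνdef
    haveI : IsProbabilityMeasure ν := cond_isProbabilityMeasure hz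
    have hpT : 0 < (μ (B ⁻¹' {t})).toReal :=
      ENNReal.toReal_pos hz (measure_ne_top μ _)
    have hν : ∀ A : Set Ω, (ν A).toReal
        = (μ (B ⁻¹' {t} ∩ A)).toReal / (μ (B ⁻¹' {t})).toReal := by
      intro A
      rw [hνdef, cond_apply hmeasB, ENNReal.toReal_mul, ENNReal.toReal_inv]
      rw [inv_mul_eq_div]
    have hν' : ∀ A : Set Ω, (μ (B ⁻¹' {t} ∩ A)).toReal
        = (μ (B ⁻¹' {t})).toReal * (ν A).toReal := by
      intro A
      rw [hν A, mul_div_cancel₀ _ hpT.ne']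
    have key := ba_mi_ge ν hO hY (𝓔 t)
    have hrw : (∑ y : U × S,
          (μ (B ⁻¹' {t} ∩ O ⁻¹' {y.1} ∩ Y ⁻¹' {y.2})).toReal * 𝓔 t y.1 y.2) -
        ∑ u : U, (μ (B ⁻¹' {t} ∩ O ⁻¹' {u})).toReal *
          Real.log (∑ s : S,
            ((μ (B ⁻¹' {t} ∩ Y ⁻¹' {s})).toReal / (μ (B ⁻¹' {t})).toReal) *
              Real.exp (𝓔 t u s))
        = (μ (B ⁻¹' {t})).toReal *
          ((∑ u : U, ∑ s : S, (ν (O ⁻¹' {u} ∩ Y ⁻¹' {s})).toReal * 𝓔 t u s)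
            - ∑ u : U, (ν (O ⁻¹' {u})).toReal *
                Real.log (∑ s : S, (ν (Y ⁻¹' {s})).toReal * Real.exp (𝓔 t u s))) := by
      rw [mul_sub]
      congr 1
      · rw [Fintype.sum_prod_type, Finset.mul_sum]
        refine Finset.sum_congr rfl fun u _ => ?_
        rw [Finset.mul_sum]
        refine Finset.sum_congr rfl fun s _ => ?_
        rw [Set.inter_assoc, hν' (O ⁻¹' {u} ∩ Y ⁻¹' {s}), mul_assoc]
      · rw [Finset.mul_sum]
        refine Finset.sum_congr rfl fun u _ => ?_
        rw [hν' (O ⁻¹' {u}), mul_assoc]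
        congr 2
        exact congrArg Real.log
          (Finset.sum_congr rfl fun s _ => by rw [hν (Y ⁻¹' {s})])
    rw [hrw]
    exact mul_le_mul_of_nonneg_left key ENNReal.toReal_nonneg
end

section
/- Tractable unnormalized Barber–Agakov (TUBA) bound: let (Ω, μ) be a probability space and let Y : Ω → S, B : Ω → T, O : Ω → U be measurable random variables taking values in finite types equipped with the discrete σ-algebra. Let 𝓔 : T → U → S → ℝ be any critic function, for (t,u) with P(B=t) > 0 define the partition function Z(t,u) = Σ_{s∈S} P(Y=s | B=t) · exp(𝓔 t u s), and let a : T → U → ℝ satisfy a(t,u) > 0 for all (t,u). Then I(O ; Y | B) ≥ 1 + Σ_{(t,u,s)} P(B=t, O=u, Y=s) · (𝓔 t u s − log a(t,u)) − Σ_{(t,u): P(B=t,O=u)>0} P(B=t, O=u) · Z(t,u)/a(t,u). -/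
open MeasureTheory ProbabilityTheory

lemma sum_inter_toReal {Ω S : Type*} [MeasurableSpace Ω] [Fintype S] [MeasurableSpace S]
    [DiscreteMeasurableSpace S] (ν : Measure Ω) [IsFiniteMeasure ν]
    (Y : Ω → S) (hY : Measurable Y) (A : Set Ω) (hA : MeasurableSet A) :
    (ν A).toReal = ∑ s : S, (ν (A ∩ Y ⁻¹' {s})).toReal := by
  rw [← ENNReal.toReal_sum (fun s _ => measure_ne_top ν _)]
  congr 1
  have h : A = ⋃ s ∈ (Finset.univ : Finset S), A ∩ Y ⁻¹' {s} := by
    ext ω; simp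
  rw [show ν A = ν (⋃ s ∈ (Finset.univ : Finset S), A ∩ Y ⁻¹' {s}) from by rw [← h]]
  rw [measure_biUnion_finset ?_ (fun s _ => hA.inter (hY (measurableSet_singleton s)))]
  intro s _ s' _ hss
  simp only [Set.disjoint_left]
  rintro ω ⟨_, h1⟩ ⟨_, h2⟩
  simp only [Set.mem_preimage, Set.mem_singleton_iff] at h1 h2
  exact hss (h1 ▸ h2 ▸ rfl)

lemma key_pointwise (r ru rs Z f : ℝ) (hr : 0 ≤ r) (hru : r ≤ ru) (hrs : r ≤ rs)
    (h0u : 0 ≤ ru) (h0s : 0 ≤ rs) (hZ : 0 < Z) :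
    r - ru * rs * Real.exp f / Z ≤
      r * Real.log r - r * Real.log ru - r * Real.log rs - r * f + r * Real.log Z := by
  rcases hr.eq_or_lt with h | h
  · have : 0 ≤ ru * rs * Real.exp f / Z := by positivity
    simp [← h]
    linarith
  · have hru' : 0 < ru := lt_of_lt_of_le h hru
    have hrs' : 0 < rs := lt_of_lt_of_le h hrs
    set m := ru * rs * Real.exp f / Z with hm
    have hm' : 0 < m := by positivity
    have hlog : Real.log m = Real.log ru + Real.log rs + f - Real.log Z := by
      rw [hm, Real.log_div (by positivity) hZ.ne', Real.log_mul (by positivity)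
        (Real.exp_pos f).ne', Real.log_mul hru'.ne' hrs'.ne', Real.log_exp]
    have h2 : Real.log (m / r) ≤ m / r - 1 := Real.log_le_sub_one_of_pos (by positivity)
    rw [Real.log_div hm'.ne' h.ne'] at h2
    have h3 : r * (Real.log m - Real.log r) ≤ r * (m / r - 1) :=
      mul_le_mul_of_nonneg_left h2 h.le
    have h4 : r * (m / r - 1) = m - r := by field_simp
    have h5 : r * Real.log m = r * Real.log ru + r * Real.log rs + r * f - r * Real.log Z := by
      rw [hlog]; ring
    nlinarith [h3, h4, h5]

lemma tuba_step {Ω S U : Type*} [MeasurableSpace Ω]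
    [Fintype S] [MeasurableSpace S] [DiscreteMeasurableSpace S]
    [Fintype U] [MeasurableSpace U] [DiscreteMeasurableSpace U]
    (ν : Measure Ω) [IsProbabilityMeasure ν]
    (O : Ω → U) (Y : Ω → S) (hO : Measurable O) (hY : Measurable Y)
    (f : U → S → ℝ) :
    (∑ u : U, ∑ s : S, (ν (O ⁻¹' {u} ∩ Y ⁻¹' {s})).toReal * f u s) -
      ∑ u : U, (ν (O ⁻¹' {u})).toReal *
        Real.log (∑ s : S, (ν (Y ⁻¹' {s})).toReal * Real.exp (f u s)) ≤
      mutualInfo ν O Y := by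
  set q : U → S → ℝ := fun u s => (ν (O ⁻¹' {u} ∩ Y ⁻¹' {s})).toReal with hq
  set qO : U → ℝ := fun u => (ν (O ⁻¹' {u})).toReal with hqOdef
  set qY : S → ℝ := fun s => (ν (Y ⁻¹' {s})).toReal with hqYdef
  set Z : U → ℝ := fun u => ∑ s : S, qY s * Real.exp (f u s) with hZdef
  have hqO : ∀ u, qO u = ∑ s : S, q u s := fun u =>
    sum_inter_toReal ν Y hY _ (hO (measurableSet_singleton u))
  have hqY : ∀ s, qY s = ∑ u : U, q u s := by
    intro s
    rw [show (qY s) = (ν (Y ⁻¹' {s})).toReal from rfl,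
      sum_inter_toReal ν O hO _ (hY (measurableSet_singleton s))]
    exact Finset.sum_congr rfl fun u _ => by rw [Set.inter_comm]
  have hq0 : ∀ u s, 0 ≤ q u s := fun u s => ENNReal.toReal_nonneg
  have hqO0 : ∀ u, 0 ≤ qO u := fun u => ENNReal.toReal_nonneg
  have hqY0 : ∀ s, 0 ≤ qY s := fun s => ENNReal.toReal_nonneg
  have hlequ : ∀ u s, q u s ≤ qO u := by
    intro u s
    exact ENNReal.toReal_mono (measure_ne_top ν _) (measure_mono Set.inter_subset_left)
  have hleqs : ∀ u s, q u s ≤ qY s := by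
    intro u s
    exact ENNReal.toReal_mono (measure_ne_top ν _) (measure_mono Set.inter_subset_right)
  have hsumY : ∑ s : S, qY s = 1 := by
    have := sum_inter_toReal ν Y hY Set.univ MeasurableSet.univ
    simp only [Set.univ_inter, measure_univ, ENNReal.toReal_one] at this
    exact this.symm
  have hsumO : ∑ u : U, qO u = 1 := by
    have := sum_inter_toReal ν O hO Set.univ MeasurableSet.univ
    simp only [Set.univ_inter, measure_univ, ENNReal.toReal_one] at this
    exact this.symm
  obtain ⟨s0, -, hs0⟩ : ∃ s ∈ Finset.univ, (0:ℝ) < qY s := by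
    by_contra hc
    push_neg at hc
    have : ∑ s : S, qY s ≤ 0 := Finset.sum_nonpos fun s hs => hc s hs
    linarith
  have hZpos : ∀ u, 0 < Z u := by
    intro u
    refine Finset.sum_pos' (fun s _ => by positivity) ⟨s0, Finset.mem_univ s0, by positivity⟩
  -- the joint preimage
  have hpre : ∀ p : U × S, (fun ω => (O ω, Y ω)) ⁻¹' {p} = O ⁻¹' {p.1} ∩ Y ⁻¹' {p.2} := by
    intro p; ext ω
    simp [Prod.ext_iff]
  -- rewrite entropies
  have hHO : entropy ν O = -∑ u : U, ∑ s : S, q u s * Real.log (qO u) := by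
    rw [entropy]
    congr 1
    refine Finset.sum_congr rfl fun u _ => ?_
    rw [← Finset.sum_mul, ← hqO u]
  have hHY : entropy ν Y = -∑ u : U, ∑ s : S, q u s * Real.log (qY s) := by
    rw [entropy, Finset.sum_comm]
    congr 1
    refine Finset.sum_congr rfl fun s _ => ?_
    rw [← Finset.sum_mul, ← hqY s]
  have hHJ : entropy ν (fun ω => (O ω, Y ω)) = -∑ u : U, ∑ s : S, q u s * Real.log (q u s) := by
    rw [entropy]
    congr 1
    rw [Fintype.sum_prod_type]
    exact Finset.sum_congr rfl fun u _ => Finset.sum_congr rfl fun s _ => by rw [hpre (u, s)]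
  have hZsum : ∑ u : U, qO u * Real.log (Z u) = ∑ u : U, ∑ s : S, q u s * Real.log (Z u) := by
    refine Finset.sum_congr rfl fun u _ => ?_
    rw [← Finset.sum_mul, ← hqO u]
  -- the key sum inequality
  have hmain : ∑ u : U, ∑ s : S, (q u s - qO u * qY s * Real.exp (f u s) / Z u) ≤
      ∑ u : U, ∑ s : S, (q u s * Real.log (q u s) - q u s * Real.log (qO u)
        - q u s * Real.log (qY s) - q u s * f u s + q u s * Real.log (Z u)) := by
    refine Finset.sum_le_sum fun u _ => Finset.sum_le_sum fun s _ => ?_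
    exact key_pointwise (q u s) (qO u) (qY s) (Z u) (f u s) (hq0 u s) (hlequ u s)
      (hleqs u s) (hqO0 u) (hqY0 s) (hZpos u)
  have hqq : ∑ u : U, ∑ s : S, q u s = 1 := by
    rw [← hsumO]
    exact (Finset.sum_congr rfl fun u _ => (hqO u).symm)
  have hmm : ∑ u : U, ∑ s : S, (qO u * qY s * Real.exp (f u s) / Z u) = 1 := by
    rw [← hsumO]
    refine Finset.sum_congr rfl fun u _ => ?_
    have : ∑ s : S, qO u * qY s * Real.exp (f u s) / Z u
        = (qO u / Z u) * ∑ s : S, qY s * Real.exp (f u s) := by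
      rw [Finset.mul_sum]
      exact Finset.sum_congr rfl fun s _ => by ring
    rw [this, show (∑ s : S, qY s * Real.exp (f u s)) = Z u from rfl]
    exact div_mul_cancel₀ (qO u) (hZpos u).ne'
  have hzero : (0:ℝ) ≤ ∑ u : U, ∑ s : S, (q u s * Real.log (q u s) - q u s * Real.log (qO u)
      - q u s * Real.log (qY s) - q u s * f u s + q u s * Real.log (Z u)) := by
    refine le_trans ?_ hmain
    rw [show ∑ u : U, ∑ s : S, (q u s - qO u * qY s * Real.exp (f u s) / Z u)
        = (∑ u : U, ∑ s : S, q u s) - ∑ u : U, ∑ s : S, (qO u * qY s * Real.exp (f u s) / Z u) by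
      rw [← Finset.sum_sub_distrib]
      exact Finset.sum_congr rfl fun u _ => by rw [← Finset.sum_sub_distrib]]
    rw [hqq, hmm]
    norm_num
  -- expand the big sum
  have hexp : ∑ u : U, ∑ s : S, (q u s * Real.log (q u s) - q u s * Real.log (qO u)
      - q u s * Real.log (qY s) - q u s * f u s + q u s * Real.log (Z u))
      = mutualInfo ν O Y - ((∑ u : U, ∑ s : S, q u s * f u s) - ∑ u : U, qO u * Real.log (Z u)) := by
    rw [mutualInfo, hHO, hHY, hHJ, hZsum]
    simp only [Finset.sum_sub_distrib, Finset.sum_add_distrib]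
    ring
  linarith [hzero, hexp]

lemma tuba_per_t {Ω S T U : Type*} [MeasurableSpace Ω]
    [Fintype S] [MeasurableSpace S] [DiscreteMeasurableSpace S]
    [Fintype T] [MeasurableSpace T] [DiscreteMeasurableSpace T]
    [Fintype U] [MeasurableSpace U] [DiscreteMeasurableSpace U]
    (μ : Measure Ω) [IsProbabilityMeasure μ]
    (Y : Ω → S) (B : Ω → T) (O : Ω → U)
    (hY : Measurable Y) (hB : Measurable B) (hO : Measurable O)
    (𝓔 : U → S → ℝ) (a : U → ℝ) (ha : ∀ u, 0 < a u) (t : T) :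
    (μ (B ⁻¹' {t})).toReal
      + (∑ u : U, ∑ s : S,
          (μ (B ⁻¹' {t} ∩ O ⁻¹' {u} ∩ Y ⁻¹' {s})).toReal * (𝓔 u s - Real.log (a u)))
      - ∑ u : U, (μ (B ⁻¹' {t} ∩ O ⁻¹' {u})).toReal *
          ((∑ s : S, (μ (B ⁻¹' {t} ∩ Y ⁻¹' {s})).toReal / (μ (B ⁻¹' {t})).toReal *
            Real.exp (𝓔 u s)) / a u)
      ≤ (μ (B ⁻¹' {t})).toReal * mutualInfo (ProbabilityTheory.cond μ (B ⁻¹' {t})) O Y := by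
  by_cases hz : μ (B ⁻¹' {t}) = 0
  · have hJ : ∀ u s, (μ (B ⁻¹' {t} ∩ O ⁻¹' {u} ∩ Y ⁻¹' {s})).toReal = 0 := by
      intro u s
      rw [measure_mono_null (Set.inter_subset_left.trans Set.inter_subset_left) hz]
      simp
    have hJO : ∀ u, (μ (B ⁻¹' {t} ∩ O ⁻¹' {u})).toReal = 0 := by
      intro u
      rw [measure_mono_null Set.inter_subset_left hz]
      simp
    simp [hz, hJ, hJO]
  · have hmeasB : MeasurableSet (B ⁻¹' {t}) := hB (measurableSet_singleton t)
    haveI : IsProbabilityMeasure (ProbabilityTheory.cond μ (B ⁻¹' {t})) :=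
      ProbabilityTheory.cond_isProbabilityMeasure (μ := μ) hz
    set P := (μ (B ⁻¹' {t})).toReal with hPdef
    set J : U → S → ℝ := fun u s => (μ (B ⁻¹' {t} ∩ O ⁻¹' {u} ∩ Y ⁻¹' {s})).toReal with hJdef
    set JO : U → ℝ := fun u => (μ (B ⁻¹' {t} ∩ O ⁻¹' {u})).toReal with hJOdef
    set JY : S → ℝ := fun s => (μ (B ⁻¹' {t} ∩ Y ⁻¹' {s})).toReal with hJYdef
    set Zr : U → ℝ := fun u => ∑ s : S, JY s / P * Real.exp (𝓔 u s) with hZrdef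
    set ν := ProbabilityTheory.cond μ (B ⁻¹' {t}) with hνdef
    show P + (∑ u : U, ∑ s : S, J u s * (𝓔 u s - Real.log (a u)))
        - (∑ u : U, JO u * (Zr u / a u)) ≤ P * mutualInfo ν O Y
    have hPpos : 0 < P := ENNReal.toReal_pos hz (measure_ne_top μ _)
    have hcond : ∀ E : Set Ω, (ν E).toReal = (μ (B ⁻¹' {t} ∩ E)).toReal / P := by
      intro E
      rw [hνdef, ProbabilityTheory.cond_apply hmeasB, ENNReal.toReal_mul, ENNReal.toReal_inv,
        ← hPdef]
      ring
    have hqq : ∀ u s, (ν (O ⁻¹' {u} ∩ Y ⁻¹' {s})).toReal = J u s / P := by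
      intro u s
      rw [hcond, ← Set.inter_assoc]
    have hqO : ∀ u, (ν (O ⁻¹' {u})).toReal = JO u / P := fun u => hcond _
    have hqY : ∀ s, (ν (Y ⁻¹' {s})).toReal = JY s / P := fun s => hcond _
    have hJ0 : ∀ u s, 0 ≤ J u s := fun u s => ENNReal.toReal_nonneg
    have hJO0 : ∀ u, 0 ≤ JO u := fun u => ENNReal.toReal_nonneg
    have hJY0 : ∀ s, 0 ≤ JY s := fun s => ENNReal.toReal_nonneg
    -- sums of marginals
    have hJOsum : ∑ u : U, JO u = P := by
      rw [hPdef, sum_inter_toReal μ O hO _ hmeasB]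
    have hJYsum : ∑ s : S, JY s = P := by
      rw [hPdef, sum_inter_toReal μ Y hY _ hmeasB]
    have hJsum : ∀ u, ∑ s : S, J u s = JO u := fun u =>
      (sum_inter_toReal μ Y hY _ (hmeasB.inter (hO (measurableSet_singleton u)))).symm
    -- Zr positivity
    obtain ⟨s0, -, hs0⟩ : ∃ s ∈ Finset.univ, (0:ℝ) < JY s := by
      by_contra hc
      push_neg at hc
      have : ∑ s : S, JY s ≤ 0 := Finset.sum_nonpos fun s hs => hc s hs
      linarith
    have hZrpos : ∀ u, 0 < Zr u := by
      intro u
      refine Finset.sum_pos'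
        (fun s _ => mul_nonneg (div_nonneg (hJY0 s) hPpos.le) (Real.exp_pos _).le)
        ⟨s0, Finset.mem_univ s0, mul_pos (div_pos hs0 hPpos) (Real.exp_pos _)⟩
    -- log bound
    have hlogZ : ∀ u, Real.log (Zr u) ≤ Zr u / a u + Real.log (a u) - 1 := by
      intro u
      have h1 : Real.log (Zr u / a u) ≤ Zr u / a u - 1 :=
        Real.log_le_sub_one_of_pos (div_pos (hZrpos u) (ha u))
      rw [Real.log_div (hZrpos u).ne' (ha u).ne'] at h1
      linarith
    -- from tuba_step
    have hstep := tuba_step ν O Y hO hY 𝓔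
    have hstep' : (∑ u : U, ∑ s : S, (J u s / P) * 𝓔 u s)
        - ∑ u : U, (JO u / P) * Real.log (Zr u) ≤ mutualInfo ν O Y := by
      have e1 : ∑ u : U, ∑ s : S, (ν (O ⁻¹' {u} ∩ Y ⁻¹' {s})).toReal * 𝓔 u s
          = ∑ u : U, ∑ s : S, (J u s / P) * 𝓔 u s :=
        Finset.sum_congr rfl fun u _ => Finset.sum_congr rfl fun s _ => by rw [hqq]
      have e2 : ∑ u : U, (ν (O ⁻¹' {u})).toReal *
            Real.log (∑ s : S, (ν (Y ⁻¹' {s})).toReal * Real.exp (𝓔 u s))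
          = ∑ u : U, (JO u / P) * Real.log (Zr u) := by
        refine Finset.sum_congr rfl fun u _ => ?_
        rw [hqO]
        congr 1
        rw [hZrdef]
        congr 1
        exact Finset.sum_congr rfl fun s _ => by rw [hqY]
      rw [e1, e2] at hstep
      exact hstep
    -- multiply by P
    have hmul := mul_le_mul_of_nonneg_left hstep' hPpos.le
    have hA : P * ((∑ u : U, ∑ s : S, (J u s / P) * 𝓔 u s)
        - ∑ u : U, (JO u / P) * Real.log (Zr u))
        = (∑ u : U, ∑ s : S, J u s * 𝓔 u s) - ∑ u : U, JO u * Real.log (Zr u) := by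
      rw [mul_sub, Finset.mul_sum, Finset.mul_sum]
      congr 1
      · refine Finset.sum_congr rfl fun u _ => ?_
        rw [Finset.mul_sum]
        refine Finset.sum_congr rfl fun s _ => ?_
        field_simp
      · refine Finset.sum_congr rfl fun u _ => ?_
        field_simp
    rw [hA] at hmul
    -- bound the log-sum
    have hlogsum : ∑ u : U, JO u * Real.log (Zr u)
        ≤ (∑ u : U, JO u * (Zr u / a u)) + (∑ u : U, JO u * Real.log (a u)) - P := by
      have h1 : ∑ u : U, JO u * Real.log (Zr u)
          ≤ ∑ u : U, JO u * (Zr u / a u + Real.log (a u) - 1) :=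
        Finset.sum_le_sum fun u _ => mul_le_mul_of_nonneg_left (hlogZ u) (hJO0 u)
      have h2 : ∑ u : U, JO u * (Zr u / a u + Real.log (a u) - 1)
          = (∑ u : U, JO u * (Zr u / a u)) + (∑ u : U, JO u * Real.log (a u))
            - ∑ u : U, JO u := by
        rw [← Finset.sum_add_distrib, ← Finset.sum_sub_distrib]
        exact Finset.sum_congr rfl fun u _ => by ring
      rw [h2, hJOsum] at h1
      exact h1
    -- expand the 𝓔 - log a sum
    have hexp : ∑ u : U, ∑ s : S, J u s * (𝓔 u s - Real.log (a u))
        = (∑ u : U, ∑ s : S, J u s * 𝓔 u s) - ∑ u : U, JO u * Real.log (a u) := by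
      rw [← Finset.sum_sub_distrib]
      refine Finset.sum_congr rfl fun u _ => ?_
      rw [← hJsum u, Finset.sum_mul, ← Finset.sum_sub_distrib]
      exact Finset.sum_congr rfl fun s _ => by ring
    linarith [hmul, hlogsum, hexp]

open scoped Classical in
/-- tractable unnormalized Barber–Agakov (TUBA) bound, with critic `𝓔`,
partition function `Z(t,u) = Σ_s P(Y=s | B=t) · exp(𝓔 t u s)` and positive baseline `a`. -/
theorem tuba_lower_bound
    {Ω S T U : Type*} [MeasurableSpace Ω]
    [Fintype S] [MeasurableSpace S] [DiscreteMeasurableSpace S]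
    [Fintype T] [MeasurableSpace T] [DiscreteMeasurableSpace T]
    [Fintype U] [MeasurableSpace U] [DiscreteMeasurableSpace U]
    (μ : Measure Ω) [IsProbabilityMeasure μ]
    (Y : Ω → S) (B : Ω → T) (O : Ω → U)
    (hY : Measurable Y) (hB : Measurable B) (hO : Measurable O)
    (𝓔 : T → U → S → ℝ)
    (a : T → U → ℝ) (ha : ∀ t u, 0 < a t u) :
    condMutualInfo μ O Y B ≥
      1 +
      (∑ x : T × U × S,
        (μ (B ⁻¹' {x.1} ∩ O ⁻¹' {x.2.1} ∩ Y ⁻¹' {x.2.2})).toReal *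
          (𝓔 x.1 x.2.1 x.2.2 - Real.log (a x.1 x.2.1))) -
      ∑ tu ∈ Finset.univ.filter
          (fun tu : T × U => 0 < (μ (B ⁻¹' {tu.1} ∩ O ⁻¹' {tu.2})).toReal),
        (μ (B ⁻¹' {tu.1} ∩ O ⁻¹' {tu.2})).toReal *
          ((∑ s : S,
            ((μ (B ⁻¹' {tu.1} ∩ Y ⁻¹' {s})).toReal / (μ (B ⁻¹' {tu.1})).toReal) *
              Real.exp (𝓔 tu.1 tu.2 s)) / a tu.1 tu.2) := by
  rw [ge_iff_le]
  have hfil : (∑ tu ∈ Finset.univ.filter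
          (fun tu : T × U => 0 < (μ (B ⁻¹' {tu.1} ∩ O ⁻¹' {tu.2})).toReal),
        (μ (B ⁻¹' {tu.1} ∩ O ⁻¹' {tu.2})).toReal *
          ((∑ s : S,
            ((μ (B ⁻¹' {tu.1} ∩ Y ⁻¹' {s})).toReal / (μ (B ⁻¹' {tu.1})).toReal) *
              Real.exp (𝓔 tu.1 tu.2 s)) / a tu.1 tu.2))
      = ∑ t : T, ∑ u : U, (μ (B ⁻¹' {t} ∩ O ⁻¹' {u})).toReal *
          ((∑ s : S, (μ (B ⁻¹' {t} ∩ Y ⁻¹' {s})).toReal / (μ (B ⁻¹' {t})).toReal *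
            Real.exp (𝓔 t u s)) / a t u) := by
    rw [Finset.sum_filter_of_ne]
    · rw [Fintype.sum_prod_type]
    · intro x _ hx
      by_contra h
      have h0 : (μ (B ⁻¹' {x.1} ∩ O ⁻¹' {x.2})).toReal = 0 :=
        le_antisymm (not_lt.mp h) ENNReal.toReal_nonneg
      rw [h0, zero_mul] at hx
      exact hx rfl
  have htriple : (∑ x : T × U × S,
        (μ (B ⁻¹' {x.1} ∩ O ⁻¹' {x.2.1} ∩ Y ⁻¹' {x.2.2})).toReal *
          (𝓔 x.1 x.2.1 x.2.2 - Real.log (a x.1 x.2.1)))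
      = ∑ t : T, ∑ u : U, ∑ s : S,
          (μ (B ⁻¹' {t} ∩ O ⁻¹' {u} ∩ Y ⁻¹' {s})).toReal *
            (𝓔 t u s - Real.log (a t u)) := by
    rw [Fintype.sum_prod_type]
    exact Finset.sum_congr rfl fun t _ => by rw [Fintype.sum_prod_type]
  have h1 : (1:ℝ) = ∑ t : T, (μ (B ⁻¹' {t})).toReal := by
    calc (1:ℝ) = (μ Set.univ).toReal := by simp
    _ = ∑ t : T, (μ (Set.univ ∩ B ⁻¹' {t})).toReal :=
        sum_inter_toReal μ B hB _ MeasurableSet.univ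
    _ = ∑ t : T, (μ (B ⁻¹' {t})).toReal := by simp [Set.univ_inter]
  rw [hfil, htriple, h1, ← Finset.sum_add_distrib, ← Finset.sum_sub_distrib]
  exact Finset.sum_le_sum fun t _ =>
    tuba_per_t μ Y B O hY hB hO (𝓔 t) (a t) (ha t) t
end
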